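/- Let s ≥ 2, r ≥ 1, and 1 ≤ k ≤ r + s − 1 be integers, and let 0 = a_0 ≤ a_1 ≤ ⋯ ≤ a_r be real numbers. For each pair (I, J) of nonempty subsets I ⊆ {0,…,s−1}, J ⊆ {0,…,r} with |I| + |J| ≥ r + s + 2 − k, define a cone L_{I,J} ⊆ ℝ² as follows: L_{I,J} = pos({(1,0)} ∪ {(−a_j, 1) : j ∈ J}) if |I| ≥ 2 and |J| ≥ 2; L_{I,J} = pos({(1,0), (−1,0)} ∪ {(−a_j, 1) : j ∈ J}) if |I| = 1 and |J| ≥ 2; and L_{I,J} = pos({(1,0), (−a_{j₀}, 1), (a_{j₀}, −1)}) if |J| = 1 with J = {j₀} and |I| ≥ 2 (the case |I| = |J| = 1 does not occur, since |I| + |J| ≥ r + s + 2 − k ≥ 3). Then the intersection of the cones L_{I,J} over all such pairs equals pos({(1,0), (−a_m, 1)}), where m = r − k + 1 if k ≤ r and m = 0 if k > r. -/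

import Mathlib

/-- The positive hull of a subset `S` of a real vector space: all finite nonnegative
linear combinations of elements of `S`. -/
def posHull {E : Type*} [AddCommGroup E] [Module ℝ E] (S : Set E) : Set E :=
  {x | ∃ (t : Finset E) (c : E → ℝ),
    ↑t ⊆ S ∧ (∀ y ∈ t, 0 ≤ c y) ∧ x = ∑ y ∈ t, c y • y}

set_option linter.unusedSectionVars false
section aux
variable {E : Type*} [AddCommGroup E] [Module ℝ E] {S : Set E} [DecidableEq E]

theorem posHull.zero_mem (S : Set E) : (0 : E) ∈ posHull S :=
  ⟨∅, fun _ => 0, by simp, by simp, by simp⟩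

theorem posHull.smul_gen_mem {c : ℝ} (hc : 0 ≤ c) {v : E} (hv : v ∈ S) :
    c • v ∈ posHull S :=
  ⟨{v}, fun _ => c, by simpa, fun _ _ => hc, by simp⟩

theorem posHull.add_mem {x y : E} (hx : x ∈ posHull S) (hy : y ∈ posHull S) :
    x + y ∈ posHull S := by
  obtain ⟨t1, c1, ht1, hc1, rfl⟩ := hx
  obtain ⟨t2, c2, ht2, hc2, rfl⟩ := hy
  refine ⟨t1 ∪ t2,
    fun v => (if v ∈ t1 then c1 v else 0) + (if v ∈ t2 then c2 v else 0), ?_, ?_, ?_⟩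
  · intro v hv
    rcases Finset.mem_union.mp (by exact_mod_cast hv) with h | h
    exacts [ht1 h, ht2 h]
  · intro v _
    have h1 : (0:ℝ) ≤ if v ∈ t1 then c1 v else 0 := by split_ifs with h; exacts [hc1 v h, le_rfl]
    have h2 : (0:ℝ) ≤ if v ∈ t2 then c2 v else 0 := by split_ifs with h; exacts [hc2 v h, le_rfl]
    exact add_nonneg h1 h2
  · simp only [add_smul, Finset.sum_add_distrib, ite_smul, zero_smul]
    rw [Finset.sum_ite_mem, Finset.sum_ite_mem, Finset.union_inter_cancel_left,
      Finset.union_inter_cancel_right]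

theorem posHull.smul_mem {c : ℝ} (hc : 0 ≤ c) {x : E} (hx : x ∈ posHull S) :
    c • x ∈ posHull S := by
  obtain ⟨t, c', ht, hc', rfl⟩ := hx
  exact ⟨t, fun v => c * c' v, ht, fun v hv => mul_nonneg hc (hc' v hv),
    by rw [Finset.smul_sum]; simp [smul_smul]⟩

theorem posHull_subset {C : Set E} (h0 : (0 : E) ∈ C)
    (hadd : ∀ x ∈ C, ∀ y ∈ C, x + y ∈ C)
    (hsmul : ∀ v ∈ S, ∀ c : ℝ, 0 ≤ c → c • v ∈ C) : posHull S ⊆ C := by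
  rintro x ⟨t, c, ht, hc, rfl⟩
  induction t using Finset.induction_on with
  | empty => simpa
  | insert v t hv ih =>
    rw [Finset.sum_insert hv]
    exact hadd _ (hsmul v (ht (by simp)) (c v) (hc v (by simp)))
      _ (ih (fun y hy => ht (by simp [hy])) (fun y hy => hc y (by simp [hy])))

theorem posHull.mem2 {v1 v2 : E} (hv1 : v1 ∈ S) (hv2 : v2 ∈ S) {c1 c2 : ℝ}
    (h1 : 0 ≤ c1) (h2 : 0 ≤ c2) : c1 • v1 + c2 • v2 ∈ posHull S :=
  posHull.add_mem (posHull.smul_gen_mem h1 hv1) (posHull.smul_gen_mem h2 hv2)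

end aux

lemma exists_big {n m : ℕ} {J : Finset (Fin n)} (h : m + 1 ≤ J.card) :
    ∃ j ∈ J, m ≤ (j : ℕ) := by
  by_contra hc
  push_neg at hc
  have hsub : J.image Fin.val ⊆ Finset.range m := by
    intro v hv
    simp only [Finset.mem_image] at hv
    obtain ⟨j, hj, rfl⟩ := hv
    exact Finset.mem_range.mpr (hc j hj)
  have := Finset.card_le_card hsub
  rw [Finset.card_image_of_injective _ Fin.val_injective, Finset.card_range] at this
  omega


/-- The cone `L_{I,J}` of the second assertion of Proposition 5.2.  When `|I| ≥ 2` and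
`|J| ≥ 2` it is `pos({(1,0)} ∪ {(−a_j,1) : j ∈ J})`; when `|I| = 1` (and `|J| ≥ 2`) it is
`pos({(1,0), (−1,0)} ∪ {(−a_j,1) : j ∈ J})`; when `|J| = 1` with `J = {j₀}` (and `|I| ≥ 2`)
it is `pos({(1,0), (−a_{j₀},1), (a_{j₀},−1)})`, which for a singleton `J` coincides with
`pos({(1,0)} ∪ {(−a_j,1) : j ∈ J} ∪ {(a_j,−1) : j ∈ J})`. -/
def Lcone (r : ℕ) (a : Fin (r + 1) → ℝ) {s : ℕ}
    (I : Finset (Fin s)) (J : Finset (Fin (r + 1))) : Set (ℝ × ℝ) :=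
  if 2 ≤ I.card ∧ 2 ≤ J.card then
    posHull ({((1 : ℝ), (0 : ℝ))} ∪
      (fun j : Fin (r + 1) => ((-a j, (1 : ℝ)) : ℝ × ℝ)) '' (J : Set (Fin (r + 1))))
  else if I.card = 1 then
    posHull ({((1 : ℝ), (0 : ℝ)), ((-1 : ℝ), (0 : ℝ))} ∪
      (fun j : Fin (r + 1) => ((-a j, (1 : ℝ)) : ℝ × ℝ)) '' (J : Set (Fin (r + 1))))
  else
    posHull ({((1 : ℝ), (0 : ℝ))} ∪
      (fun j : Fin (r + 1) => ((-a j, (1 : ℝ)) : ℝ × ℝ)) '' (J : Set (Fin (r + 1))) ∪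
      (fun j : Fin (r + 1) => ((a j, (-1 : ℝ)) : ℝ × ℝ)) '' (J : Set (Fin (r + 1))))

/-- The computation of the cone `𝓛_{Δ_k}` in Proposition 5.2: the intersection of the
cones `L_{I,J}` over all pairs `(I, J)` of nonempty subsets `I ⊆ {0,…,s−1}`,
`J ⊆ {0,…,r}` with `|I| + |J| ≥ r + s + 2 − k` equals `pos({(1,0), (−a_m, 1)})`, where
`m = r − k + 1` if `k ≤ r` and `m = 0` if `k > r`. -/
lemma zero_mem_Lcone {r s : ℕ} (a : Fin (r+1) → ℝ) (I : Finset (Fin s))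
    (J : Finset (Fin (r+1))) : (0 : ℝ × ℝ) ∈ Lcone r a I J := by
  unfold Lcone; split_ifs <;> exact posHull.zero_mem _

lemma add_mem_Lcone {r s : ℕ} {a : Fin (r+1) → ℝ} {I : Finset (Fin s)}
    {J : Finset (Fin (r+1))} {x y : ℝ × ℝ} (hx : x ∈ Lcone r a I J)
    (hy : y ∈ Lcone r a I J) : x + y ∈ Lcone r a I J := by
  unfold Lcone at hx hy ⊢
  split_ifs at hx hy ⊢ <;> exact posHull.add_mem hx hy

lemma combo_mem_Lcone {r s : ℕ} {a : Fin (r+1) → ℝ} {I : Finset (Fin s)}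
    {J : Finset (Fin (r+1))} {j : Fin (r+1)} (hj : j ∈ J) {b c : ℝ}
    (hb : 0 ≤ b) (hc : 0 ≤ c) :
    b • (((1:ℝ), (0:ℝ)) : ℝ × ℝ) + c • ((-a j, (1:ℝ)) : ℝ × ℝ) ∈ Lcone r a I J := by
  unfold Lcone
  split_ifs
  · refine posHull.mem2 ?_ ?_ hb hc
    · exact Set.mem_union_left _ rfl
    · exact Set.mem_union_right _ ⟨j, Finset.mem_coe.mpr hj, rfl⟩
  · refine posHull.mem2 ?_ ?_ hb hc
    · exact Set.mem_union_left _ (Set.mem_insert _ _)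
    · exact Set.mem_union_right _ ⟨j, Finset.mem_coe.mpr hj, rfl⟩
  · refine posHull.mem2 ?_ ?_ hb hc
    · exact Set.mem_union_left _ (Set.mem_union_left _ rfl)
    · exact Set.mem_union_left _ (Set.mem_union_right _ ⟨j, Finset.mem_coe.mpr hj, rfl⟩)

lemma rhs_subset_Lcone {r s : ℕ} {a : Fin (r+1) → ℝ} {I : Finset (Fin s)}
    {J : Finset (Fin (r+1))} {M j : Fin (r+1)} (hj : j ∈ J) (hMj : a M ≤ a j) :
    posHull {(((1:ℝ), (0:ℝ)) : ℝ × ℝ), ((-a M, (1:ℝ)) : ℝ × ℝ)} ⊆ Lcone r a I J := by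
  apply posHull_subset (zero_mem_Lcone a I J) (fun x hx y hy => add_mem_Lcone hx hy)
  rintro v (rfl | rfl) c hc
  · have h := combo_mem_Lcone (I := I) (a := a) hj hc (le_refl (0:ℝ))
    simpa using h
  · have heq : c • ((-a M, (1:ℝ)) : ℝ × ℝ)
        = (c * (a j - a M)) • (((1:ℝ), (0:ℝ)) : ℝ × ℝ) + c • ((-a j, (1:ℝ)) : ℝ × ℝ) := by
      simp [Prod.ext_iff]; ring
    rw [heq]
    exact combo_mem_Lcone hj (mul_nonneg hc (by linarith)) hc

theorem L_Delta_k_eq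
    (s r k : ℕ) (hs : 2 ≤ s) (hr : 1 ≤ r) (hk : 1 ≤ k) (hk' : k ≤ r + s - 1)
    (a : Fin (r + 1) → ℝ) (ha0 : a 0 = 0) (hmono : Monotone a) :
    (⋂ (I : Finset (Fin s)) (J : Finset (Fin (r + 1)))
        (_ : I.Nonempty) (_ : J.Nonempty)
        (_ : r + s + 2 ≤ I.card + J.card + k),
      Lcone r a I J)
    = posHull {((1 : ℝ), (0 : ℝ)),
        ((-a (if _ : k ≤ r then ⟨r - k + 1, by omega⟩ else 0), (1 : ℝ)) : ℝ × ℝ)} := by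
  classical
  have ha : ∀ j, 0 ≤ a j := fun j => by rw [← ha0]; exact hmono (Fin.zero_le j)
  have hFs : Nonempty (Fin s) := ⟨⟨0, by omega⟩⟩
  apply Set.Subset.antisymm
  · -- hard direction
    intro x hx
    simp only [Set.mem_iInter] at hx
    have main : ∀ M : Fin (r+1), ((M : ℕ) = if k ≤ r then r - k + 1 else 0) →
        x ∈ posHull {(((1:ℝ), (0:ℝ)) : ℝ × ℝ), ((-a M, (1:ℝ)) : ℝ × ℝ)} := by
      intro M hM
      by_cases hkr : k ≤ r
      · rw [if_pos hkr] at hM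
        have hx1 := hx Finset.univ (Finset.Iic M) Finset.univ_nonempty
          ⟨M, Finset.mem_Iic.mpr le_rfl⟩
          (by rw [Finset.card_univ, Fintype.card_fin, Fin.card_Iic]; omega)
        unfold Lcone at hx1
        rw [if_pos (⟨by simpa using hs, by rw [Fin.card_Iic]; omega⟩ :
          2 ≤ (Finset.univ : Finset (Fin s)).card ∧ 2 ≤ (Finset.Iic M).card)] at hx1
        refine posHull_subset (posHull.zero_mem _)
          (fun p hp q hq => posHull.add_mem hp hq) ?_ hx1
        intro v hv c hc
        simp only [Set.mem_union, Set.mem_singleton_iff, Set.mem_image,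
          Finset.mem_coe] at hv
        rcases hv with rfl | ⟨j, hj, rfl⟩
        · exact posHull.smul_gen_mem hc (Set.mem_insert _ _)
        · have hjm : a j ≤ a M := hmono (Finset.mem_Iic.mp hj)
          have heq : c • ((-a j, (1:ℝ)) : ℝ × ℝ)
              = (c * (a M - a j)) • (((1:ℝ), (0:ℝ)) : ℝ × ℝ)
                + c • ((-a M, (1:ℝ)) : ℝ × ℝ) := by
            simp [Prod.ext_iff]; ring
          rw [heq]
          refine posHull.mem2 ?_ ?_ (mul_nonneg hc (by linarith)) hc
          · exact Set.mem_insert _ _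
          · exact Set.mem_insert_of_mem _ rfl
      · rw [if_neg hkr] at hM
        have hM0 : a M = 0 := by
          have : M = 0 := Fin.ext (by simpa using hM)
          rw [this, ha0]
        -- first cone : I = univ, J = {0, 1}, gives 0 ≤ x.2
        have h01 : (0 : Fin (r+1)) ≠ ⟨1, by omega⟩ := by
          simp [Fin.ext_iff]
        have hx1 := hx Finset.univ ({0, ⟨1, by omega⟩} : Finset (Fin (r+1)))
          Finset.univ_nonempty (Finset.insert_nonempty _ _)
          (by rw [Finset.card_univ, Fintype.card_fin, Finset.card_pair h01]; omega)
        unfold Lcone at hx1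
        rw [if_pos (⟨by simpa using hs, by rw [Finset.card_pair h01]⟩ :
          2 ≤ (Finset.univ : Finset (Fin s)).card ∧
            2 ≤ ({0, ⟨1, by omega⟩} : Finset (Fin (r+1))).card)] at hx1
        have hy : 0 ≤ x.2 := by
          refine posHull_subset (C := {p : ℝ × ℝ | 0 ≤ p.2}) (by simp)
            (fun p hp q hq => by simp only [Set.mem_setOf_eq, Prod.snd_add] at *; linarith)
            ?_ hx1
          intro v hv c hc
          simp only [Set.mem_union, Set.mem_singleton_iff, Set.mem_image,
            Finset.mem_coe] at hv
          rcases hv with rfl | ⟨j, hj, rfl⟩ <;>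
            simp only [Set.mem_setOf_eq, Prod.smul_snd, smul_eq_mul] <;> nlinarith
        -- second cone : I = I1 with card r+s+1-k, J = {0}, gives 0 ≤ x.1
        obtain ⟨I1, hI1sub, hI1card⟩ := Finset.exists_subset_card_eq
          (s := (Finset.univ : Finset (Fin s))) (n := r + s + 1 - k)
          (by rw [Finset.card_univ, Fintype.card_fin]; omega)
        have hI1c2 : 2 ≤ I1.card := by rw [hI1card]; omega
        have hx2 := hx I1 ({0} : Finset (Fin (r+1)))
          (Finset.card_pos.mp (by omega)) (Finset.singleton_nonempty _)
          (by rw [hI1card, Finset.card_singleton]; omega)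
        unfold Lcone at hx2
        rw [if_neg (by rw [Finset.card_singleton]; omega), if_neg (by omega)] at hx2
        have hxx : 0 ≤ x.1 := by
          refine posHull_subset (C := {p : ℝ × ℝ | 0 ≤ p.1}) (by simp)
            (fun p hp q hq => by simp only [Set.mem_setOf_eq, Prod.fst_add] at *; linarith)
            ?_ hx2
          intro v hv c hc
          simp only [Set.mem_union, Set.mem_singleton_iff, Set.mem_image,
            Finset.mem_coe, Finset.mem_singleton] at hv
          rcases hv with (rfl | ⟨j, rfl, rfl⟩) | ⟨j, rfl, rfl⟩ <;>
            simp only [Set.mem_setOf_eq, Prod.smul_fst, smul_eq_mul] <;>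
            [nlinarith; (rw [ha0]; simp); (rw [ha0]; positivity)]
        have heq : x = x.1 • (((1:ℝ), (0:ℝ)) : ℝ × ℝ) + x.2 • ((-a M, (1:ℝ)) : ℝ × ℝ) := by
          simp [Prod.ext_iff, hM0]
        rw [heq]
        refine posHull.mem2 ?_ ?_ hxx hy
        · exact Set.mem_insert _ _
        · exact Set.mem_insert_of_mem _ rfl
    apply main
    split_ifs with h <;> simp
  · -- easy direction
    intro x hx
    simp only [Set.mem_iInter]
    intro I J hI hJ hcard
    have hIs : I.card ≤ s := le_trans (Finset.card_le_univ I) (by simp)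
    obtain ⟨j, hjJ, hjm⟩ := exists_big (m := if k ≤ r then r - k + 1 else 0) (J := J)
      (by have := hJ.card_pos; split_ifs with h <;> omega)
    refine rhs_subset_Lcone hjJ ?_ hx
    apply hmono
    rw [Fin.le_def]
    split_ifs at hjm with h
    · rw [dif_pos h]; simpa using hjm
    · rw [dif_neg h]; simp
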